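/- Let V be a finite set of size n ≥ 1 equipped with an injective attribute function A : V → ℝ. Then there exists a finite family 𝒞 of nonempty subsets of V such that: (i) every element of V belongs to at most 1 + ⌈log₂ n⌉ members of 𝒞; and (ii) for every pair of reals x ≤ y, the set {v ∈ V : x ≤ A(v) ≤ y} is the union of at most 2·(1 + ⌈log₂ n⌉) pairwise disjoint members of 𝒞. (Consequently, ∑_{U ∈ 𝒞} |U| ≤ n·(1 + ⌈log₂ n⌉).) -/

import Mathlib

set_option linter.unusedVariables false
set_option linter.unusedSectionVars false
set_option maxHeartbeats 1000000

open Classical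

set_option linter.unusedVariables false

def segDec : ℕ → ℕ → ℕ → List (ℕ × ℕ)
  | k, a, b =>
    if h : b ≤ a then []
    else ((if a % 2 = 1 then [(k, a)] else []) ++
          (if b % 2 = 1 then [(k, b - 1)] else []) ++
          segDec (k+1) ((a+1)/2) (b/2))
  termination_by k a b => b
  decreasing_by omega

lemma segDec_mem : ∀ k a b, ∀ p ∈ segDec k a b,
    k ≤ p.1 ∧ a * 2^k ≤ p.2 * 2^p.1 ∧ (p.2+1) * 2^p.1 ≤ b * 2^k := by
  intro k a b
  induction k, a, b using segDec.induct with
  | case1 k a b h => rw [segDec]; simp [h]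
  | case2 k a b h ih =>
    intro p hp
    rw [segDec] at hp
    simp only [dif_neg h, List.mem_append, List.mem_ite_nil_right, List.mem_singleton] at hp
    have h2 : (2:ℕ)^(k+1) = 2 * 2^k := by ring
    have hpk : (0:ℕ) < 2^k := Nat.pow_pos (by norm_num)
    rcases hp with (⟨ha, rfl⟩ | ⟨hb, rfl⟩) | hrec
    · exact ⟨le_refl _, Nat.le_refl _, by simp only []; nlinarith⟩
    · have hb1 : 1 ≤ b := by omega
      refine ⟨le_refl _, ?_, ?_⟩ <;> simp only [] <;> nlinarith [Nat.sub_add_cancel hb1]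
    · obtain ⟨h1, h2', h3⟩ := ih p hrec
      have ha' : a ≤ (a+1)/2 * 2 := by omega
      have hb' : b/2 * 2 ≤ b := by omega
      refine ⟨by omega, le_trans ?_ h2', le_trans h3 ?_⟩
      · rw [h2]; nlinarith
      · rw [h2]; nlinarith

lemma segDec_cover : ∀ k a b, ∀ m, a*2^k ≤ m → m < b*2^k →
    ∃ p ∈ segDec k a b, p.2 * 2^p.1 ≤ m ∧ m < (p.2+1)*2^p.1 := by
  intro k a b
  induction k, a, b using segDec.induct with
  | case1 k a b h =>
    intro m h1 h2
    exfalso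
    have : b * 2^k ≤ a * 2^k := Nat.mul_le_mul_right _ h
    omega
  | case2 k a b h ih =>
    intro m h1 h2
    have h2k : (2:ℕ)^(k+1) = 2 * 2^k := by ring
    rw [segDec]
    simp only [dif_neg h]
    by_cases hca : a % 2 = 1 ∧ m < (a+1) * 2^k
    · exact ⟨(k, a), by simp [hca.1], h1, hca.2⟩
    by_cases hcb : b % 2 = 1 ∧ (b-1) * 2^k ≤ m
    · refine ⟨(k, b-1), by simp [hcb.1], hcb.2, ?_⟩
      have hb : b - 1 + 1 = b := by omega
      simpa [hb] using h2
    · have ha' : (a+1)/2 * 2^(k+1) ≤ m := by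
        rw [h2k, ← Nat.mul_assoc]
        rcases Nat.even_or_odd a with he | ho
        · have he' : a % 2 = 0 := Nat.even_iff.mp he
          have hh : (a+1)/2 * 2 = a := by omega
          rw [hh]; exact h1
        · have ho' : a % 2 = 1 := Nat.odd_iff.mp ho
          have hh : (a+1)/2 * 2 = a + 1 := by omega
          rw [hh]
          exact not_lt.mp (not_and.mp hca ho')
      have hb' : m < b/2 * 2^(k+1) := by
        rw [h2k, ← Nat.mul_assoc]
        rcases Nat.even_or_odd b with he | ho
        · have he' : b % 2 = 0 := Nat.even_iff.mp he
          have hh : b/2 * 2 = b := by omega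
          rw [hh]; exact h2
        · have ho' : b % 2 = 1 := Nat.odd_iff.mp ho
          have hh : b/2 * 2 = b - 1 := by omega
          rw [hh]
          exact not_le.mp (not_and.mp hcb ho')
      obtain ⟨p, hp, hm⟩ := ih m ha' hb'
      exact ⟨p, by simp [hp], hm⟩

lemma segDec_pairwise : ∀ k a b, (segDec k a b).Pairwise
    (fun p q => (p.2+1)*2^p.1 ≤ q.2*2^q.1 ∨ (q.2+1)*2^q.1 ≤ p.2*2^p.1) := by
  intro k a b
  induction k, a, b using segDec.induct with
  | case1 k a b h => rw [segDec]; simp [h]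
  | case2 k a b h ih =>
    rw [segDec]
    simp only [dif_neg h]
    have h2k : (2:ℕ)^(k+1) = 2 * 2^k := by ring
    rw [List.pairwise_append, List.pairwise_append]
    refine ⟨⟨?_, ?_, ?_⟩, ih, ?_⟩
    · split <;> simp
    · split <;> simp
    · -- headA vs headB
      intro q hq p hp
      rcases List.mem_ite_nil_right.mp hq with ⟨ha1, hq'⟩
      obtain rfl := List.mem_singleton.mp hq'
      rcases List.mem_ite_nil_right.mp hp with ⟨hb1, hp'⟩
      obtain rfl := List.mem_singleton.mp hp'
      left
      have hab : a + 1 ≤ b - 1 := by omega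
      exact Nat.mul_le_mul_right _ hab
    · -- heads vs rec
      intro q hq p hp
      obtain ⟨-, hp2, hp3⟩ := segDec_mem _ _ _ p hp
      rcases List.mem_append.mp hq with hq | hq
      · rcases List.mem_ite_nil_right.mp hq with ⟨ha1, hq'⟩
        obtain rfl := List.mem_singleton.mp hq'
        left
        refine le_trans ?_ hp2
        rw [h2k, ← Nat.mul_assoc]
        have hh : (a+1)/2*2 = a+1 := by omega
        rw [hh]
      · rcases List.mem_ite_nil_right.mp hq with ⟨hb1, hq'⟩
        obtain rfl := List.mem_singleton.mp hq'
        right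
        refine le_trans hp3 ?_
        rw [h2k, ← Nat.mul_assoc]
        have hh : b/2*2 = b - 1 := by omega
        rw [hh]

lemma segDec_length : ∀ k a b, (segDec k a b).length ≤ 2*(Nat.log 2 b + 1) := by
  intro k a b
  induction k, a, b using segDec.induct with
  | case1 k a b h => rw [segDec]; simp [h]
  | case2 k a b h ih =>
    rw [segDec]
    simp only [dif_neg h]
    simp only [List.length_append]
    have hl1 : (if a % 2 = 1 then [(k, a)] else []).length ≤ 1 := by split <;> simp
    have hl2 : (if b % 2 = 1 then [(k, b-1)] else []).length ≤ 1 := by split <;> simp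
    by_cases hb2 : 2 ≤ b
    · have hd : Nat.log 2 (b/2) = Nat.log 2 b - 1 := Nat.log_div_base 2 b
      have hpos : 0 < Nat.log 2 b := Nat.log_pos (by norm_num) hb2
      omega
    · have hb1 : b = 1 := by omega
      have ha0 : a = 0 := by omega
      subst hb1; subst ha0
      have hnil : segDec (k+1) ((0+1)/2) (1/2) = [] := by rw [segDec]; simp
      simp [hnil]


section RK
variable {V : Type} [Fintype V] [DecidableEq V]

noncomputable def rk (A : V → ℝ) (v : V) : ℕ :=
  (Finset.univ.filter (fun w => A w < A v)).card

lemma rk_lt (A : V → ℝ) (v : V) : rk A v < Fintype.card V := by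
  have hv : v ∉ Finset.univ.filter (fun w => A w < A v) := by simp
  have hss : Finset.univ.filter (fun w => A w < A v) ⊂ Finset.univ :=
    (Finset.ssubset_iff_of_subset (Finset.subset_univ _)).mpr ⟨v, Finset.mem_univ v, hv⟩
  have := Finset.card_lt_card hss
  rw [Finset.card_univ] at this
  exact this

lemma rk_lt_rk (A : V → ℝ) {v w : V} (h : A v < A w) : rk A v < rk A w := by
  have hsub : insert v (Finset.univ.filter (fun u => A u < A v)) ⊆
      Finset.univ.filter (fun u => A u < A w) := by
    intro u hu
    rcases Finset.mem_insert.mp hu with rfl | hu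
    · simp [h]
    · simp only [Finset.mem_filter, Finset.mem_univ, true_and] at hu ⊢
      exact hu.trans h
  have hnm : v ∉ Finset.univ.filter (fun u => A u < A v) := by simp
  have := Finset.card_le_card hsub
  rw [Finset.card_insert_of_notMem hnm] at this
  unfold rk
  omega

lemma rk_surj (A : V → ℝ) (hA : Function.Injective A) :
    ∀ j < Fintype.card V, ∃ v, rk A v = j := by
  have hinj : Function.Injective (rk A) := by
    intro v w hvw
    by_contra hne
    rcases lt_trichotomy (A v) (A w) with h | h | h
    · exact absurd hvw (Nat.ne_of_lt (rk_lt_rk A h))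
    · exact hne (hA h)
    · exact absurd hvw.symm (Nat.ne_of_lt (rk_lt_rk A h))
  have hsub : Finset.univ.image (rk A) ⊆ Finset.range (Fintype.card V) := by
    intro j hj
    rcases Finset.mem_image.mp hj with ⟨v, -, rfl⟩
    exact Finset.mem_range.mpr (rk_lt A v)
  have hcard : (Finset.univ.image (rk A)).card = Fintype.card V := by
    rw [Finset.card_image_of_injective _ hinj]; simp
  have heq : Finset.univ.image (rk A) = Finset.range (Fintype.card V) :=
    Finset.eq_of_subset_of_card_le hsub (by simp [hcard])
  intro j hj
  have : j ∈ Finset.univ.image (rk A) := heq ▸ Finset.mem_range.mpr hj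
  rcases Finset.mem_image.mp this with ⟨v, -, hv⟩
  exact ⟨v, hv⟩

lemma rk_lower (A : V → ℝ) (x : ℝ) (v : V) :
    x ≤ A v ↔ (Finset.univ.filter (fun w => A w < x)).card ≤ rk A v := by
  constructor
  · intro h
    apply Finset.card_le_card
    intro u hu
    simp only [Finset.mem_filter, Finset.mem_univ, true_and] at hu ⊢
    exact lt_of_lt_of_le hu h
  · intro h
    by_contra hc
    push_neg at hc
    have hsub : insert v (Finset.univ.filter (fun u => A u < A v)) ⊆
        Finset.univ.filter (fun w => A w < x) := by
      intro u hu
      rcases Finset.mem_insert.mp hu with rfl | hu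
      · simp [hc]
      · simp only [Finset.mem_filter, Finset.mem_univ, true_and] at hu ⊢
        exact hu.trans hc
    have hnm : v ∉ Finset.univ.filter (fun u => A u < A v) := by simp
    have := Finset.card_le_card hsub
    rw [Finset.card_insert_of_notMem hnm] at this
    unfold rk at h
    omega

lemma rk_upper (A : V → ℝ) (y : ℝ) (v : V) :
    A v ≤ y ↔ rk A v < (Finset.univ.filter (fun w => A w ≤ y)).card := by
  constructor
  · intro h
    have hsub : insert v (Finset.univ.filter (fun u => A u < A v)) ⊆
        Finset.univ.filter (fun w => A w ≤ y) := by
      intro u hu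
      rcases Finset.mem_insert.mp hu with rfl | hu
      · simp [h]
      · simp only [Finset.mem_filter, Finset.mem_univ, true_and] at hu ⊢
        exact le_of_lt (lt_of_lt_of_le hu h)
    have hnm : v ∉ Finset.univ.filter (fun u => A u < A v) := by simp
    have := Finset.card_le_card hsub
    rw [Finset.card_insert_of_notMem hnm] at this
    unfold rk
    omega
  · intro h
    by_contra hc
    push_neg at hc
    have hsub : Finset.univ.filter (fun w => A w ≤ y) ⊆
        Finset.univ.filter (fun u => A u < A v) := by
      intro u hu
      simp only [Finset.mem_filter, Finset.mem_univ, true_and] at hu ⊢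
      exact lt_of_le_of_lt hu hc
    have := Finset.card_le_card hsub
    unfold rk at h
    omega

end RK

noncomputable def bs {V : Type} [Fintype V] (A : V → ℝ) (k i : ℕ) : Finset V :=
  Finset.univ.filter (fun v => i * 2^k ≤ rk A v ∧ rk A v < (i+1) * 2^k)

theorem canonical_collection_exists
    {V : Type} [Fintype V] [DecidableEq V]
    (hn : 1 ≤ Fintype.card V)
    (A : V → ℝ) (hA : Function.Injective A) :
    ∃ 𝒞 : Finset (Finset V),
      (∀ U ∈ 𝒞, U.Nonempty) ∧
      (∀ v : V, ((𝒞.filter (fun U => v ∈ U)).card : ℤ)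
          ≤ 1 + ⌈Real.logb 2 (Fintype.card V)⌉) ∧
      (∀ x y : ℝ, x ≤ y →
        ∃ D : Finset (Finset V), D ⊆ 𝒞 ∧
          ((D : Set (Finset V)).Pairwise fun U U' => Disjoint U U') ∧
          Finset.univ.filter (fun v => x ≤ A v ∧ A v ≤ y) = D.biUnion id ∧
          (D.card : ℤ) ≤ 2 * (1 + ⌈Real.logb 2 (Fintype.card V)⌉)) ∧
      (∑ U ∈ 𝒞, (U.card : ℤ))
        ≤ (Fintype.card V : ℤ) * (1 + ⌈Real.logb 2 (Fintype.card V)⌉) := by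
  classical
  set n := Fintype.card V with hndef
  set L := Nat.log 2 n with hLdef
  have hceil : (L : ℤ) ≤ ⌈Real.logb 2 (n:ℝ)⌉ := by
    have h1 : (L : ℝ) ≤ Real.logb 2 n := Real.natLog_le_logb n 2
    have h2 := Int.le_ceil (Real.logb 2 (n:ℝ))
    have : ((L : ℤ) : ℝ) ≤ ((⌈Real.logb 2 (n:ℝ)⌉ : ℤ) : ℝ) := by push_cast; linarith
    exact_mod_cast this
  set 𝒞 : Finset (Finset V) :=
    ((Finset.range (L+1) ×ˢ Finset.range n).image (fun p => bs A p.1 p.2)).filter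
      (fun U => U.Nonempty) with h𝒞def
  have hBmem : ∀ k i, k ≤ L → i < n → (bs A k i).Nonempty → bs A k i ∈ 𝒞 := by
    intro k i hk hi hne
    refine Finset.mem_filter.mpr ⟨?_, hne⟩
    exact Finset.mem_image.mpr ⟨(k,i),
      Finset.mem_product.mpr ⟨Finset.mem_range.mpr (by omega), Finset.mem_range.mpr hi⟩, rfl⟩
  have hcount : ∀ v : V, (𝒞.filter (fun U => v ∈ U)).card ≤ L + 1 := by
    intro v
    have hsub : 𝒞.filter (fun U => v ∈ U) ⊆
        (Finset.range (L+1)).image (fun k => bs A k (rk A v / 2^k)) := by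
      intro U hU
      obtain ⟨hU𝒞, hvU⟩ := Finset.mem_filter.mp hU
      obtain ⟨himg, -⟩ := Finset.mem_filter.mp hU𝒞
      obtain ⟨p, hp, rfl⟩ := Finset.mem_image.mp himg
      obtain ⟨hk, hi⟩ := Finset.mem_product.mp hp
      have hv : p.2 * 2^p.1 ≤ rk A v ∧ rk A v < (p.2+1)*2^p.1 := by
        simpa [bs] using hvU
      have hdiv : rk A v / 2^p.1 = p.2 :=
        Nat.div_eq_of_lt_le hv.1 hv.2
      exact Finset.mem_image.mpr ⟨p.1, hk, by rw [hdiv]⟩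
    calc (𝒞.filter (fun U => v ∈ U)).card
        ≤ ((Finset.range (L+1)).image (fun k => bs A k (rk A v / 2^k))).card :=
          Finset.card_le_card hsub
      _ ≤ (Finset.range (L+1)).card := Finset.card_image_le
      _ = L + 1 := Finset.card_range _
  refine ⟨𝒞, fun U hU => (Finset.mem_filter.mp hU).2, ?_, ?_, ?_⟩
  · -- (i)
    intro v
    have := hcount v
    have h1 : ((𝒞.filter (fun U => v ∈ U)).card : ℤ) ≤ (L : ℤ) + 1 := by exact_mod_cast this
    omega
  · -- (ii)
    intro x y hxy
    set a := (Finset.univ.filter (fun w => A w < x)).card with hadef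
    set b := (Finset.univ.filter (fun w => A w ≤ y)).card with hbdef
    have hab : a ≤ b := by
      apply Finset.card_le_card
      intro w hw
      simp only [Finset.mem_filter, Finset.mem_univ, true_and] at hw ⊢
      linarith
    have hbn : b ≤ n := by
      have := Finset.card_filter_le (Finset.univ : Finset V) (fun w => A w ≤ y)
      simpa [hndef] using this
    set lst := segDec 0 a b with hlstdef
    set D := lst.toFinset.image (fun p => bs A p.1 p.2) with hDdef
    have hmemlst : ∀ p ∈ lst, a ≤ p.2 * 2^p.1 ∧ (p.2+1) * 2^p.1 ≤ b := by
      intro p hp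
      obtain ⟨-, h1, h2⟩ := segDec_mem 0 a b p hp
      rw [pow_zero, mul_one] at h1 h2
      exact ⟨h1, h2⟩
    have hD𝒞 : D ⊆ 𝒞 := by
      intro U hU
      obtain ⟨p, hp, rfl⟩ := Finset.mem_image.mp hU
      have hp' : p ∈ lst := List.mem_toFinset.mp hp
      obtain ⟨h1, h2⟩ := hmemlst p hp'
      have hpow : 0 < 2^p.1 := Nat.pow_pos (by norm_num)
      have hm : p.2 * 2^p.1 < n := by
        have : p.2 * 2^p.1 < (p.2+1) * 2^p.1 :=
          (Nat.mul_lt_mul_right hpow).mpr (Nat.lt_succ_self _)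
        omega
      have hk : p.1 ≤ L := by
        apply Nat.le_log_of_pow_le (by norm_num)
        have : 2^p.1 ≤ (p.2+1) * 2^p.1 := Nat.le_mul_of_pos_left _ (by omega)
        omega
      have hi : p.2 < n := by
        have : p.2 ≤ p.2 * 2^p.1 := Nat.le_mul_of_pos_right _ hpow
        omega
      obtain ⟨v, hv⟩ := rk_surj A hA (p.2 * 2^p.1) hm
      refine hBmem p.1 p.2 hk hi ⟨v, ?_⟩
      simp only [bs, Finset.mem_filter, Finset.mem_univ, true_and, hv]
      constructor
      · exact le_refl _
      · exact (Nat.mul_lt_mul_right hpow).mpr (Nat.lt_succ_self _)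
    refine ⟨D, hD𝒞, ?_, ?_, ?_⟩
    · -- pairwise disjoint
      intro U hU U' hU' hne
      obtain ⟨p, hp, rfl⟩ := Finset.mem_image.mp (Finset.mem_coe.mp hU)
      obtain ⟨q, hq, rfl⟩ := Finset.mem_image.mp (Finset.mem_coe.mp hU')
      have hp' : p ∈ lst := List.mem_toFinset.mp hp
      have hq' : q ∈ lst := List.mem_toFinset.mp hq
      have hpq : p ≠ q := fun h => hne (by rw [h])
      have hsymm : Symmetric (fun p q : ℕ × ℕ =>
          (p.2+1)*2^p.1 ≤ q.2*2^q.1 ∨ (q.2+1)*2^q.1 ≤ p.2*2^p.1) :=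
        fun _ _ h => h.symm
      haveI : Std.Symm (fun p q : ℕ × ℕ =>
          (p.2+1)*2^p.1 ≤ q.2*2^q.1 ∨ (q.2+1)*2^q.1 ≤ p.2*2^p.1) := ⟨fun _ _ h => hsymm h⟩
      have hR := (segDec_pairwise 0 a b).forall hp' hq' hpq
      rw [Finset.disjoint_left]
      intro v hv hv'
      simp only [bs, Finset.mem_filter, Finset.mem_univ, true_and] at hv hv'
      rcases hR with hR | hR
      · exact absurd (lt_of_lt_of_le hv.2 (le_trans hR hv'.1)) (lt_irrefl _)
      · exact absurd (lt_of_lt_of_le hv'.2 (le_trans hR hv.1)) (lt_irrefl _)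
    · -- union
      ext v
      simp only [Finset.mem_filter, Finset.mem_univ, true_and, Finset.mem_biUnion, id]
      constructor
      · rintro ⟨hx, hy⟩
        have hrka : a ≤ rk A v := (rk_lower A x v).mp hx
        have hrkb : rk A v < b := (rk_upper A y v).mp hy
        obtain ⟨p, hp, hm1, hm2⟩ := segDec_cover 0 a b (rk A v) (by simpa) (by simpa)
        refine ⟨bs A p.1 p.2, ?_, ?_⟩
        · exact Finset.mem_image.mpr ⟨p, List.mem_toFinset.mpr hp, rfl⟩
        · simp only [bs, Finset.mem_filter, Finset.mem_univ, true_and]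
          exact ⟨hm1, hm2⟩
      · rintro ⟨U, hU, hvU⟩
        obtain ⟨p, hp, rfl⟩ := Finset.mem_image.mp hU
        obtain ⟨h1, h2⟩ := hmemlst p (List.mem_toFinset.mp hp)
        simp only [bs, Finset.mem_filter, Finset.mem_univ, true_and] at hvU
        constructor
        · exact (rk_lower A x v).mpr (by omega)
        · exact (rk_upper A y v).mpr (by omega)
    · -- card bound
      have hc1 : D.card ≤ lst.length := by
        calc D.card ≤ lst.toFinset.card := Finset.card_image_le
          _ ≤ lst.length := lst.toFinset_card_le
      have hc2 : lst.length ≤ 2 * (Nat.log 2 b + 1) := segDec_length 0 a b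
      have hc3 : Nat.log 2 b ≤ L := Nat.log_mono_right hbn
      have : D.card ≤ 2 * (L + 1) := by omega
      have h4 : (D.card : ℤ) ≤ 2 * ((L:ℤ) + 1) := by exact_mod_cast this
      omega
  · -- sum bound
    have hswap : ∑ U ∈ 𝒞, U.card = ∑ v : V, (𝒞.filter (fun U => v ∈ U)).card := by
      have h1 : ∀ U ∈ 𝒞, U.card = ∑ v : V, if v ∈ U then 1 else 0 := by
        intro U hU
        rw [Finset.sum_boole]
        congr 1
        ext w
        simp
      rw [Finset.sum_congr rfl h1, Finset.sum_comm]
      apply Finset.sum_congr rfl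
      intro v hv
      simp [Finset.sum_boole]
    have hb : ∑ U ∈ 𝒞, U.card ≤ n * (L + 1) := by
      rw [hswap]
      calc ∑ v : V, (𝒞.filter (fun U => v ∈ U)).card
          ≤ ∑ _v : V, (L + 1) := Finset.sum_le_sum (fun v _ => hcount v)
        _ = n * (L + 1) := by rw [Finset.sum_const, Finset.card_univ]; ring
    have hcast : (∑ U ∈ 𝒞, (U.card : ℤ)) = ((∑ U ∈ 𝒞, U.card : ℕ) : ℤ) := by push_cast; rfl
    rw [hcast]
    have h5 : ((∑ U ∈ 𝒞, U.card : ℕ) : ℤ) ≤ (n : ℤ) * ((L : ℤ) + 1) := by exact_mod_cast hb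
    have h6 : (n:ℤ) * ((L:ℤ)+1) ≤ (n:ℤ) * (1 + ⌈Real.logb 2 (n:ℝ)⌉) := by
      apply mul_le_mul_of_nonneg_left _ (by positivity)
      omega
    omega
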